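/- Consider the five-dimensional space E₄ = span{1, x, x², x³, x⁶} of functions on [−1,1]. The functions p_{4,0}(x) = 5/56 − (9/28)x + (45/112)x² − (5/28)x³ + (1/112)x⁶, p_{4,1}(x) = 2/7 − (3/7)x − (3/14)x² + (3/7)x³ − (1/14)x⁶, p_{4,2}(x) = 1/4 − (3/8)x² + (1/8)x⁶, p_{4,3}(x) = 2/7 + (3/7)x − (3/14)x² − (3/7)x³ − (1/14)x⁶, p_{4,4}(x) = 5/56 + (9/28)x + (45/112)x² + (5/28)x³ + (1/112)x⁶ form the unique normalized Bernstein basis of E₄ on [−1,1], each p_{4,k} being strictly positive on (−1,1). Moreover x³ = −p_{4,0} + (3/4)p_{4,1} + 0·p_{4,2} − (3/4)p_{4,3} + p_{4,4}, so the operator B₄f = Σ_{k=0}^4 f(γ_{4,k}^{1/3}) p_{4,k} with (γ_{4,0},…,γ_{4,4}) = (−1, 3/4, 0, −3/4, 1) fixes 1 and x³; its node sequence satisfies t_{4,0} < t_{4,3} < t_{4,2} < t_{4,1} < t_{4,4} and is therefore not non-decreasing. -/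

import Mathlib

open Set Filter Topology

noncomputable section

/-- `p k`, `k = 0, …, n`, is a Bernstein basis of the `(n+1)`-dimensional subspace `U` of
`C^n([a,b], ℝ)`: it is a basis of `U` and each `p k` has a zero of order `k` at `a`
(derivatives of order `< k` vanish at `a`, the `k`-th does not) and a zero of order
`n - k` at `b`. -/
def IsBernsteinBasisOf (a b : ℝ) (n : ℕ) (U : Submodule ℝ (ℝ → ℝ))
    (p : Fin (n + 1) → ℝ → ℝ) : Prop :=
  (∀ k, p k ∈ U) ∧ LinearIndependent ℝ p ∧ Submodule.span ℝ (Set.range p) = U ∧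
  ∀ k : Fin (n + 1),
    (∀ j : ℕ, j < (k : ℕ) → iteratedDeriv j (p k) a = 0) ∧
    iteratedDeriv (k : ℕ) (p k) a ≠ 0 ∧
    (∀ j : ℕ, j < n - (k : ℕ) → iteratedDeriv j (p k) b = 0) ∧
    iteratedDeriv (n - (k : ℕ)) (p k) b ≠ 0


/-- The five-dimensional space `E₄ = span{1, x, x², x³, x⁶}`. -/
def E₄ : Submodule ℝ (ℝ → ℝ) :=
  Submodule.span ℝ
    {(fun _ => (1 : ℝ)), (fun x => x), (fun x => x ^ 2), (fun x => x ^ 3), (fun x => x ^ 6)}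

/-- The normalized Bernstein basis of `E₄` on `[-1,1]`. -/
def pE4 : Fin 5 → ℝ → ℝ :=
  ![fun x => 5 / 56 - 9 / 28 * x + 45 / 112 * x ^ 2 - 5 / 28 * x ^ 3 + 1 / 112 * x ^ 6,
    fun x => 2 / 7 - 3 / 7 * x - 3 / 14 * x ^ 2 + 3 / 7 * x ^ 3 - 1 / 14 * x ^ 6,
    fun x => 1 / 4 - 3 / 8 * x ^ 2 + 1 / 8 * x ^ 6,
    fun x => 2 / 7 + 3 / 7 * x - 3 / 14 * x ^ 2 - 3 / 7 * x ^ 3 - 1 / 14 * x ^ 6,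
    fun x => 5 / 56 + 9 / 28 * x + 45 / 112 * x ^ 2 + 5 / 28 * x ^ 3 + 1 / 112 * x ^ 6]

/-- The coordinates of `x³` in the basis `pE4`. -/
def γE4 : Fin 5 → ℝ := ![-1, 3 / 4, 0, -3 / 4, 1]

/-! ### Auxiliary machinery -/

private lemma fin5_cases (k : Fin 5) : k = 0 ∨ k = 1 ∨ k = 2 ∨ k = 3 ∨ k = 4 := by
  fin_cases k <;> decide

private lemma poly_iterderiv (Q : Polynomial ℝ) (n : ℕ) :
    iteratedDeriv n (fun x => Q.eval x) = fun x => ((Polynomial.derivative (R := ℝ))^[n] Q).eval x := by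
  induction n with
  | zero => simp
  | succ n ih =>
    rw [iteratedDeriv_succ, ih, Function.iterate_succ_apply']
    funext x
    exact Polynomial.deriv _

private def GP (c0 c1 c2 c3 c4 : ℝ) : Polynomial ℝ :=
  Polynomial.C c0 + Polynomial.C c1 * Polynomial.X + Polynomial.C c2 * Polynomial.X ^ 2 +
  Polynomial.C c3 * Polynomial.X ^ 3 + Polynomial.C c4 * Polynomial.X ^ 6

private lemma GF_eq (c0 c1 c2 c3 c4 : ℝ) :
    (fun x : ℝ => c0 + c1 * x + c2 * x ^ 2 + c3 * x ^ 3 + c4 * x ^ 6)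
      = fun x => (GP c0 c1 c2 c3 c4).eval x := by
  funext x; simp [GP]

private lemma gd0 (c0 c1 c2 c3 c4 y : ℝ) :
    iteratedDeriv 0 (fun x : ℝ => c0 + c1 * x + c2 * x ^ 2 + c3 * x ^ 3 + c4 * x ^ 6) y
      = c0 + c1 * y + c2 * y ^ 2 + c3 * y ^ 3 + c4 * y ^ 6 := by
  simp

private lemma gd1 (c0 c1 c2 c3 c4 y : ℝ) :
    iteratedDeriv 1 (fun x : ℝ => c0 + c1 * x + c2 * x ^ 2 + c3 * x ^ 3 + c4 * x ^ 6) y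
      = c1 + 2 * c2 * y + 3 * c3 * y ^ 2 + 6 * c4 * y ^ 5 := by
  rw [GF_eq, poly_iterderiv]
  simp [GP]
  ring

private lemma gd2 (c0 c1 c2 c3 c4 y : ℝ) :
    iteratedDeriv 2 (fun x : ℝ => c0 + c1 * x + c2 * x ^ 2 + c3 * x ^ 3 + c4 * x ^ 6) y
      = 2 * c2 + 6 * c3 * y + 30 * c4 * y ^ 4 := by
  rw [GF_eq, poly_iterderiv]
  simp [GP, Function.iterate_succ_apply', Polynomial.derivative_pow]
  ring

private lemma gd3 (c0 c1 c2 c3 c4 y : ℝ) :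
    iteratedDeriv 3 (fun x : ℝ => c0 + c1 * x + c2 * x ^ 2 + c3 * x ^ 3 + c4 * x ^ 6) y
      = 6 * c3 + 120 * c4 * y ^ 3 := by
  rw [GF_eq, poly_iterderiv]
  simp [GP, Function.iterate_succ_apply', Polynomial.derivative_pow]
  ring

private lemma gd4 (c0 c1 c2 c3 c4 y : ℝ) :
    iteratedDeriv 4 (fun x : ℝ => c0 + c1 * x + c2 * x ^ 2 + c3 * x ^ 3 + c4 * x ^ 6) y
      = 360 * c4 * y ^ 2 := by
  rw [GF_eq, poly_iterderiv]
  simp [GP, Function.iterate_succ_apply', Polynomial.derivative_pow]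
  ring

private def mE : Fin 5 → ℝ → ℝ :=
  ![(fun _ => (1 : ℝ)), (fun x => x), (fun x => x ^ 2), (fun x => x ^ 3), (fun x => x ^ 6)]

private lemma E4_eq_span : E₄ = Submodule.span ℝ (Set.range mE) := by
  have h : Set.range mE =
      {(fun _ => (1 : ℝ)), (fun x => x), (fun x => x ^ 2), (fun x => x ^ 3), (fun x => x ^ 6)} := by
    ext f
    constructor
    · rintro ⟨i, rfl⟩
      rcases fin5_cases i with rfl | rfl | rfl | rfl | rfl <;> simp [mE]
    · intro hf
      rcases hf with h | h | h | h | h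
      · exact ⟨0, by simp [mE, h]⟩
      · exact ⟨1, by simp [mE, h]⟩
      · exact ⟨2, by simp [mE, h]⟩
      · exact ⟨3, by simp [mE, h]⟩
      · rw [Set.mem_singleton_iff] at h
        exact ⟨4, by simp [mE, h]⟩
  rw [E₄, h]

private lemma sum_smul_mE (c : Fin 5 → ℝ) :
    ∑ i, c i • mE i = fun x => c 0 + c 1 * x + c 2 * x ^ 2 + c 3 * x ^ 3 + c 4 * x ^ 6 := by
  funext x
  simp [mE, Fin.sum_univ_five]

private lemma mem_E4 (f : ℝ → ℝ) :
    f ∈ E₄ ↔ ∃ c : Fin 5 → ℝ,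
      (fun x => c 0 + c 1 * x + c 2 * x ^ 2 + c 3 * x ^ 3 + c 4 * x ^ 6) = f := by
  rw [E4_eq_span, Submodule.mem_span_range_iff_exists_fun]
  constructor
  · rintro ⟨c, hc⟩
    exact ⟨c, by rw [← sum_smul_mE c, hc]⟩
  · rintro ⟨c, hc⟩
    exact ⟨c, by rw [sum_smul_mE c, hc]⟩

/-- pointwise values -/
private lemma hq0 (x : ℝ) : pE4 0 x
    = 5 / 56 - 9 / 28 * x + 45 / 112 * x ^ 2 - 5 / 28 * x ^ 3 + 1 / 112 * x ^ 6 := rfl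
private lemma hq1 (x : ℝ) : pE4 1 x
    = 2 / 7 - 3 / 7 * x - 3 / 14 * x ^ 2 + 3 / 7 * x ^ 3 - 1 / 14 * x ^ 6 := rfl
private lemma hq2 (x : ℝ) : pE4 2 x
    = 1 / 4 - 3 / 8 * x ^ 2 + 1 / 8 * x ^ 6 := rfl
private lemma hq3 (x : ℝ) : pE4 3 x
    = 2 / 7 + 3 / 7 * x - 3 / 14 * x ^ 2 - 3 / 7 * x ^ 3 - 1 / 14 * x ^ 6 := rfl
private lemma hq4 (x : ℝ) : pE4 4 x
    = 5 / 56 + 9 / 28 * x + 45 / 112 * x ^ 2 + 5 / 28 * x ^ 3 + 1 / 112 * x ^ 6 := rfl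

/-- functional forms matching the `gd` lemmas -/
private lemma hp0 : pE4 0 = fun x : ℝ =>
    5 / 56 + -(9 / 28) * x + 45 / 112 * x ^ 2 + -(5 / 28) * x ^ 3 + 1 / 112 * x ^ 6 := by
  funext x; rw [hq0]; try ring
private lemma hp1 : pE4 1 = fun x : ℝ =>
    2 / 7 + -(3 / 7) * x + -(3 / 14) * x ^ 2 + 3 / 7 * x ^ 3 + -(1 / 14) * x ^ 6 := by
  funext x; rw [hq1]; try ring
private lemma hp2 : pE4 2 = fun x : ℝ =>
    1 / 4 + 0 * x + -(3 / 8) * x ^ 2 + 0 * x ^ 3 + 1 / 8 * x ^ 6 := by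
  funext x; rw [hq2]; try ring
private lemma hp3 : pE4 3 = fun x : ℝ =>
    2 / 7 + 3 / 7 * x + -(3 / 14) * x ^ 2 + -(3 / 7) * x ^ 3 + -(1 / 14) * x ^ 6 := by
  funext x; rw [hq3]; try ring
private lemma hp4 : pE4 4 = fun x : ℝ =>
    5 / 56 + 9 / 28 * x + 45 / 112 * x ^ 2 + 5 / 28 * x ^ 3 + 1 / 112 * x ^ 6 := by
  funext x; rw [hq4]; try ring

private lemma pE4_mem : ∀ k, pE4 k ∈ E₄ := by
  intro k
  rw [mem_E4]
  rcases fin5_cases k with rfl | rfl | rfl | rfl | rfl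
  · exact ⟨![5 / 56, -(9 / 28), 45 / 112, -(5 / 28), 1 / 112], by
      funext x; rw [hq0]; norm_num [Matrix.cons_val_two, Matrix.cons_val_three, Matrix.cons_val_four]; try ring⟩
  · exact ⟨![2 / 7, -(3 / 7), -(3 / 14), 3 / 7, -(1 / 14)], by
      funext x; rw [hq1]; norm_num [Matrix.cons_val_two, Matrix.cons_val_three, Matrix.cons_val_four]; try ring⟩
  · exact ⟨![1 / 4, 0, -(3 / 8), 0, 1 / 8], by
      funext x; rw [hq2]; norm_num [Matrix.cons_val_two, Matrix.cons_val_three, Matrix.cons_val_four]; try ring⟩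
  · exact ⟨![2 / 7, 3 / 7, -(3 / 14), -(3 / 7), -(1 / 14)], by
      funext x; rw [hq3]; norm_num [Matrix.cons_val_two, Matrix.cons_val_three, Matrix.cons_val_four]; try ring⟩
  · exact ⟨![5 / 56, 9 / 28, 45 / 112, 5 / 28, 1 / 112], by
      funext x; rw [hq4]; norm_num [Matrix.cons_val_two, Matrix.cons_val_three, Matrix.cons_val_four]; try ring⟩

private lemma pE4_eval (g : Fin 5 → ℝ) (x : ℝ) :
    ∑ i, g i • pE4 i x =
      g 0 * (5 / 56 - 9 / 28 * x + 45 / 112 * x ^ 2 - 5 / 28 * x ^ 3 + 1 / 112 * x ^ 6) +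
      g 1 * (2 / 7 - 3 / 7 * x - 3 / 14 * x ^ 2 + 3 / 7 * x ^ 3 - 1 / 14 * x ^ 6) +
      g 2 * (1 / 4 - 3 / 8 * x ^ 2 + 1 / 8 * x ^ 6) +
      g 3 * (2 / 7 + 3 / 7 * x - 3 / 14 * x ^ 2 - 3 / 7 * x ^ 3 - 1 / 14 * x ^ 6) +
      g 4 * (5 / 56 + 9 / 28 * x + 45 / 112 * x ^ 2 + 5 / 28 * x ^ 3 + 1 / 112 * x ^ 6) := by
  rw [Fin.sum_univ_five, hq0, hq1, hq2, hq3, hq4]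
  simp [smul_eq_mul]

private lemma pE4_linIndep : LinearIndependent ℝ pE4 := by
  rw [Fintype.linearIndependent_iff]
  intro g hg
  have e : ∀ x : ℝ, ∑ i, g i • pE4 i x = 0 := by
    intro x
    have := congrFun hg x
    simpa [Finset.sum_apply] using this
  have e1 := e (-1); have e2 := e 1; have e3 := e 0
  have e4 := e (1 / 2); have e5 := e (-(1 / 2))
  rw [pE4_eval] at e1 e2 e3 e4 e5
  norm_num at e1 e2 e3 e4 e5
  have h0 : g 0 = 0 := by linarith
  have h4 : g 4 = 0 := by linarith
  have h1 : g 1 = 0 := by linarith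
  have h2 : g 2 = 0 := by linarith
  have h3 : g 3 = 0 := by linarith
  intro i
  rcases fin5_cases i with rfl | rfl | rfl | rfl | rfl
  exacts [h0, h1, h2, h3, h4]

private lemma sum_smul_pE4_apply (c : Fin 5 → ℝ) (x : ℝ) :
    (∑ i, c i • pE4 i) x = ∑ i, c i • pE4 i x := by
  simp

private lemma pE4_span : Submodule.span ℝ (Set.range pE4) = E₄ := by
  apply le_antisymm
  · rw [Submodule.span_le]
    rintro _ ⟨k, rfl⟩
    exact pE4_mem k
  · rw [E4_eq_span, Submodule.span_le]
    rintro _ ⟨i, rfl⟩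
    rcases fin5_cases i with rfl | rfl | rfl | rfl | rfl
    · refine (Submodule.mem_span_range_iff_exists_fun ℝ).mpr ⟨![1, 1, 1, 1, 1], ?_⟩
      funext x
      rw [sum_smul_pE4_apply, pE4_eval]
      show _ = (1 : ℝ)
      norm_num [Matrix.cons_val_two, Matrix.cons_val_three, Matrix.cons_val_four]
      ring
    · refine (Submodule.mem_span_range_iff_exists_fun ℝ).mpr ⟨![-1, -(5 / 12), 0, 5 / 12, 1], ?_⟩
      funext x
      rw [sum_smul_pE4_apply, pE4_eval]
      show _ = x
      norm_num [Matrix.cons_val_two, Matrix.cons_val_three, Matrix.cons_val_four]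
      ring
    · refine (Submodule.mem_span_range_iff_exists_fun ℝ).mpr ⟨![1, -(1 / 6), -(1 / 3), -(1 / 6), 1], ?_⟩
      funext x
      rw [sum_smul_pE4_apply, pE4_eval]
      show _ = x ^ 2
      norm_num [Matrix.cons_val_two, Matrix.cons_val_three, Matrix.cons_val_four]
      ring
    · refine (Submodule.mem_span_range_iff_exists_fun ℝ).mpr ⟨![-1, 3 / 4, 0, -(3 / 4), 1], ?_⟩
      funext x
      rw [sum_smul_pE4_apply, pE4_eval]
      show _ = x ^ 3
      norm_num [Matrix.cons_val_two, Matrix.cons_val_three, Matrix.cons_val_four]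
      ring
    · refine (Submodule.mem_span_range_iff_exists_fun ℝ).mpr ⟨![1, -(5 / 2), 5, -(5 / 2), 1], ?_⟩
      funext x
      rw [sum_smul_pE4_apply, pE4_eval]
      show _ = x ^ 6
      norm_num [Matrix.cons_val_two, Matrix.cons_val_three, Matrix.cons_val_four]
      ring

private lemma pE4_deriv_conds :
    ∀ k : Fin 5,
      (∀ j : ℕ, j < (k : ℕ) → iteratedDeriv j (pE4 k) (-1) = 0) ∧
      iteratedDeriv (k : ℕ) (pE4 k) (-1) ≠ 0 ∧
      (∀ j : ℕ, j < 4 - (k : ℕ) → iteratedDeriv j (pE4 k) 1 = 0) ∧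
      iteratedDeriv (4 - (k : ℕ)) (pE4 k) 1 ≠ 0 := by
  intro k
  rcases fin5_cases k with rfl | rfl | rfl | rfl | rfl
  · refine ⟨fun j hj => absurd (show j < 0 from hj) (Nat.not_lt_zero j), ?_, ?_, ?_⟩
    · show iteratedDeriv 0 (pE4 0) (-1) ≠ 0
      rw [hp0, gd0]; norm_num
    · intro j hj
      replace hj : j < 4 := hj
      interval_cases j
      · show iteratedDeriv 0 (pE4 0) 1 = 0
        rw [hp0, gd0]; norm_num
      · show iteratedDeriv 1 (pE4 0) 1 = 0
        rw [hp0, gd1]; norm_num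
      · show iteratedDeriv 2 (pE4 0) 1 = 0
        rw [hp0, gd2]; norm_num
      · show iteratedDeriv 3 (pE4 0) 1 = 0
        rw [hp0, gd3]; norm_num
    · show iteratedDeriv 4 (pE4 0) 1 ≠ 0
      rw [hp0, gd4]; norm_num
  · refine ⟨?_, ?_, ?_, ?_⟩
    · intro j hj
      replace hj : j < 1 := hj
      interval_cases j
      show iteratedDeriv 0 (pE4 1) (-1) = 0
      rw [hp1, gd0]; norm_num
    · show iteratedDeriv 1 (pE4 1) (-1) ≠ 0
      rw [hp1, gd1]; norm_num
    · intro j hj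
      replace hj : j < 3 := hj
      interval_cases j
      · show iteratedDeriv 0 (pE4 1) 1 = 0
        rw [hp1, gd0]; norm_num
      · show iteratedDeriv 1 (pE4 1) 1 = 0
        rw [hp1, gd1]; norm_num
      · show iteratedDeriv 2 (pE4 1) 1 = 0
        rw [hp1, gd2]; norm_num
    · show iteratedDeriv 3 (pE4 1) 1 ≠ 0
      rw [hp1, gd3]; norm_num
  · refine ⟨?_, ?_, ?_, ?_⟩
    · intro j hj
      replace hj : j < 2 := hj
      interval_cases j
      · show iteratedDeriv 0 (pE4 2) (-1) = 0
        rw [hp2, gd0]; norm_num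
      · show iteratedDeriv 1 (pE4 2) (-1) = 0
        rw [hp2, gd1]; norm_num
    · show iteratedDeriv 2 (pE4 2) (-1) ≠ 0
      rw [hp2, gd2]; norm_num
    · intro j hj
      replace hj : j < 2 := hj
      interval_cases j
      · show iteratedDeriv 0 (pE4 2) 1 = 0
        rw [hp2, gd0]; norm_num
      · show iteratedDeriv 1 (pE4 2) 1 = 0
        rw [hp2, gd1]; norm_num
    · show iteratedDeriv 2 (pE4 2) 1 ≠ 0
      rw [hp2, gd2]; norm_num
  · refine ⟨?_, ?_, ?_, ?_⟩
    · intro j hj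
      replace hj : j < 3 := hj
      interval_cases j
      · show iteratedDeriv 0 (pE4 3) (-1) = 0
        rw [hp3, gd0]; norm_num
      · show iteratedDeriv 1 (pE4 3) (-1) = 0
        rw [hp3, gd1]; norm_num
      · show iteratedDeriv 2 (pE4 3) (-1) = 0
        rw [hp3, gd2]; norm_num
    · show iteratedDeriv 3 (pE4 3) (-1) ≠ 0
      rw [hp3, gd3]; norm_num
    · intro j hj
      replace hj : j < 1 := hj
      interval_cases j
      show iteratedDeriv 0 (pE4 3) 1 = 0
      rw [hp3, gd0]; norm_num
    · show iteratedDeriv 1 (pE4 3) 1 ≠ 0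
      rw [hp3, gd1]; norm_num
  · refine ⟨?_, ?_, fun j hj => absurd (show j < 0 from hj) (Nat.not_lt_zero j), ?_⟩
    · intro j hj
      replace hj : j < 4 := hj
      interval_cases j
      · show iteratedDeriv 0 (pE4 4) (-1) = 0
        rw [hp4, gd0]; norm_num
      · show iteratedDeriv 1 (pE4 4) (-1) = 0
        rw [hp4, gd1]; norm_num
      · show iteratedDeriv 2 (pE4 4) (-1) = 0
        rw [hp4, gd2]; norm_num
      · show iteratedDeriv 3 (pE4 4) (-1) = 0
        rw [hp4, gd3]; norm_num
    · show iteratedDeriv 4 (pE4 4) (-1) ≠ 0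
      rw [hp4, gd4]; norm_num
    · show iteratedDeriv 0 (pE4 4) 1 ≠ 0
      rw [hp4, gd0]; norm_num

/-- On `[-1,1]`, the five listed functions form the unique normalized Bernstein basis of
`E₄ = span{1, x, x², x³, x⁶}`, each strictly positive on `(-1,1)`;
`x³ = -p₀ + (3/4)p₁ + 0·p₂ - (3/4)p₃ + p₄`, and the operator `B₄ f = ∑ f(γ k ^{1/3}) p k`
(with unit weights, nodes the real cube roots of the `γ k`) fixes `1` and `x³`, but its
node sequence satisfies `t₀ < t₃ < t₂ < t₁ < t₄`, hence is not non-decreasing. -/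
theorem e4_normalized_bernstein_basis_and_nonmonotone_nodes :
    IsBernsteinBasisOf (-1) 1 4 E₄ pE4 ∧
    (∀ k, ∀ x ∈ Set.Icc (-1 : ℝ) 1, 0 ≤ pE4 k x) ∧
    (∀ k, ∀ x ∈ Set.Ioo (-1 : ℝ) 1, 0 < pE4 k x) ∧
    (∀ x ∈ Set.Icc (-1 : ℝ) 1, ∑ k, pE4 k x = 1) ∧
    (∀ r : Fin 5 → ℝ → ℝ, IsBernsteinBasisOf (-1) 1 4 E₄ r →
      (∀ k, ∀ x ∈ Set.Icc (-1 : ℝ) 1, 0 ≤ r k x) →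
      (∀ x ∈ Set.Icc (-1 : ℝ) 1, ∑ k, r k x = 1) →
      ∀ k, ∀ x ∈ Set.Icc (-1 : ℝ) 1, r k x = pE4 k x) ∧
    (∀ x : ℝ, x ^ 3 = ∑ k, γE4 k * pE4 k x) ∧
    (∀ t : Fin 5 → ℝ, (∀ k, (t k) ^ 3 = γE4 k) →
      (∀ k, t k ∈ Set.Icc (-1 : ℝ) 1) ∧
      (∀ x : ℝ, ∑ k, pE4 k x = 1) ∧
      (∀ x : ℝ, ∑ k, (t k) ^ 3 * pE4 k x = x ^ 3) ∧
      (t 0 < t 3 ∧ t 3 < t 2 ∧ t 2 < t 1 ∧ t 1 < t 4) ∧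
      ¬ Monotone t) := by
  have sum_one : ∀ x : ℝ, ∑ k, pE4 k x = 1 := by
    intro x
    rw [Fin.sum_univ_five, hq0, hq1, hq2, hq3, hq4]
    ring
  have xcube : ∀ x : ℝ, x ^ 3 = ∑ k, γE4 k * pE4 k x := by
    intro x
    rw [Fin.sum_univ_five, hq0, hq1, hq2, hq3, hq4]
    norm_num [γE4, Matrix.cons_val_two, Matrix.cons_val_three, Matrix.cons_val_four]
    ring
  refine ⟨⟨pE4_mem, pE4_linIndep, pE4_span, pE4_deriv_conds⟩, ?_, ?_,
    fun x _ => sum_one x, ?_, xcube, ?_⟩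
  · -- nonnegativity on Icc
    intro k x hx
    obtain ⟨h1, h2⟩ := hx
    have hx1 : (0 : ℝ) ≤ 1 - x := by linarith
    have hx2 : (0 : ℝ) ≤ x + 1 := by linarith
    rcases fin5_cases k with rfl | rfl | rfl | rfl | rfl
    · rw [hq0, show (5 / 56 : ℝ) - 9 / 28 * x + 45 / 112 * x ^ 2 - 5 / 28 * x ^ 3 + 1 / 112 * x ^ 6
          = ((x - 1) ^ 2) ^ 2 * ((x + 2) ^ 2 + 6) / 112 from by ring]
      positivity
    · rw [hq1, show (2 / 7 : ℝ) - 3 / 7 * x - 3 / 14 * x ^ 2 + 3 / 7 * x ^ 3 - 1 / 14 * x ^ 6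
          = (1 - x) ^ 3 * (x + 1) * ((x + 1) ^ 2 + 3) / 14 from by ring]
      positivity
    · rw [hq2, show (1 / 4 : ℝ) - 3 / 8 * x ^ 2 + 1 / 8 * x ^ 6
          = ((1 - x) * (1 + x)) ^ 2 * (x ^ 2 + 2) / 8 from by ring]
      positivity
    · rw [hq3, show (2 / 7 : ℝ) + 3 / 7 * x - 3 / 14 * x ^ 2 - 3 / 7 * x ^ 3 - 1 / 14 * x ^ 6
          = (x + 1) ^ 3 * (1 - x) * ((x - 1) ^ 2 + 3) / 14 from by ring]
      positivity
    · rw [hq4, show (5 / 56 : ℝ) + 9 / 28 * x + 45 / 112 * x ^ 2 + 5 / 28 * x ^ 3 + 1 / 112 * x ^ 6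
          = ((x + 1) ^ 2) ^ 2 * ((x - 2) ^ 2 + 6) / 112 from by ring]
      positivity
  · -- positivity on Ioo
    intro k x hx
    obtain ⟨h1, h2⟩ := hx
    have hx1 : (0 : ℝ) < 1 - x := by linarith
    have hx2 : (0 : ℝ) < x + 1 := by linarith
    rcases fin5_cases k with rfl | rfl | rfl | rfl | rfl
    · rw [hq0, show (5 / 56 : ℝ) - 9 / 28 * x + 45 / 112 * x ^ 2 - 5 / 28 * x ^ 3 + 1 / 112 * x ^ 6
          = ((1 - x) ^ 2) ^ 2 * ((x + 2) ^ 2 + 6) / 112 from by ring]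
      have h3 : (0 : ℝ) < (1 - x) ^ 2 := by positivity
      positivity
    · rw [hq1, show (2 / 7 : ℝ) - 3 / 7 * x - 3 / 14 * x ^ 2 + 3 / 7 * x ^ 3 - 1 / 14 * x ^ 6
          = (1 - x) ^ 3 * (x + 1) * ((x + 1) ^ 2 + 3) / 14 from by ring]
      positivity
    · rw [hq2, show (1 / 4 : ℝ) - 3 / 8 * x ^ 2 + 1 / 8 * x ^ 6
          = ((1 - x) * (1 + x)) ^ 2 * (x ^ 2 + 2) / 8 from by ring]
      have h3 : (0 : ℝ) < (1 - x) * (1 + x) := by nlinarith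
      positivity
    · rw [hq3, show (2 / 7 : ℝ) + 3 / 7 * x - 3 / 14 * x ^ 2 - 3 / 7 * x ^ 3 - 1 / 14 * x ^ 6
          = (x + 1) ^ 3 * (1 - x) * ((x - 1) ^ 2 + 3) / 14 from by ring]
      positivity
    · rw [hq4, show (5 / 56 : ℝ) + 9 / 28 * x + 45 / 112 * x ^ 2 + 5 / 28 * x ^ 3 + 1 / 112 * x ^ 6
          = ((x + 1) ^ 2) ^ 2 * ((x - 2) ^ 2 + 6) / 112 from by ring]
      positivity
  · -- uniqueness
    intro r hr _hnn hnorm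
    obtain ⟨hmem, _hli, _hsp, hder⟩ := hr
    have key : ∀ k : Fin 5, ∃ μ : ℝ, ∀ x, r k x = μ * pE4 k x := by
      intro k
      obtain ⟨c, hc⟩ := (mem_E4 (r k)).mp (hmem k)
      have hcx : ∀ x, r k x = c 0 + c 1 * x + c 2 * x ^ 2 + c 3 * x ^ 3 + c 4 * x ^ 6 :=
        fun x => (congrFun hc x).symm
      have hd := hder k
      rw [← hc] at hd
      rcases fin5_cases k with rfl | rfl | rfl | rfl | rfl
      · -- k = 0 : conditions at 1 for j = 0,1,2,3
        have e0 := hd.2.2.1 0 (by decide)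
        have e1 := hd.2.2.1 1 (by decide)
        have e2 := hd.2.2.1 2 (by decide)
        have e3 := hd.2.2.1 3 (by decide)
        rw [gd0] at e0; rw [gd1] at e1; rw [gd2] at e2; rw [gd3] at e3
        norm_num at e0 e1 e2 e3
        have h3 : c 3 = -20 * c 4 := by linarith
        have h2 : c 2 = 45 * c 4 := by linarith
        have h1 : c 1 = -36 * c 4 := by linarith
        have h0 : c 0 = 10 * c 4 := by linarith
        refine ⟨112 * c 4, fun x => ?_⟩
        rw [hcx x, hq0, h0, h1, h2, h3]; ring
      · -- k = 1
        have a0 := hd.1 0 (by decide)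
        have e0 := hd.2.2.1 0 (by decide)
        have e1 := hd.2.2.1 1 (by decide)
        have e2 := hd.2.2.1 2 (by decide)
        rw [gd0] at a0 e0; rw [gd1] at e1; rw [gd2] at e2
        norm_num at a0 e0 e1 e2
        have h0 : c 0 = -4 * c 4 := by linarith
        have h1 : c 1 = 6 * c 4 := by linarith
        have h2 : c 2 = 3 * c 4 := by linarith
        have h3 : c 3 = -6 * c 4 := by linarith
        refine ⟨-14 * c 4, fun x => ?_⟩
        rw [hcx x, hq1, h0, h1, h2, h3]; ring
      · -- k = 2
        have a0 := hd.1 0 (by decide)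
        have a1 := hd.1 1 (by decide)
        have e0 := hd.2.2.1 0 (by decide)
        have e1 := hd.2.2.1 1 (by decide)
        rw [gd0] at a0 e0; rw [gd1] at a1 e1
        norm_num at a0 a1 e0 e1
        have h0 : c 0 = 2 * c 4 := by linarith
        have h1 : c 1 = 0 := by linarith
        have h2 : c 2 = -3 * c 4 := by linarith
        have h3 : c 3 = 0 := by linarith
        refine ⟨8 * c 4, fun x => ?_⟩
        rw [hcx x, hq2, h0, h1, h2, h3]; ring
      · -- k = 3
        have a0 := hd.1 0 (by decide)
        have a1 := hd.1 1 (by decide)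
        have a2 := hd.1 2 (by decide)
        have e0 := hd.2.2.1 0 (by decide)
        rw [gd0] at a0 e0; rw [gd1] at a1; rw [gd2] at a2
        norm_num at a0 a1 a2 e0
        have h0 : c 0 = -4 * c 4 := by linarith
        have h1 : c 1 = -6 * c 4 := by linarith
        have h2 : c 2 = 3 * c 4 := by linarith
        have h3 : c 3 = 6 * c 4 := by linarith
        refine ⟨-14 * c 4, fun x => ?_⟩
        rw [hcx x, hq3, h0, h1, h2, h3]; ring
      · -- k = 4
        have a0 := hd.1 0 (by decide)
        have a1 := hd.1 1 (by decide)
        have a2 := hd.1 2 (by decide)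
        have a3 := hd.1 3 (by decide)
        rw [gd0] at a0; rw [gd1] at a1; rw [gd2] at a2; rw [gd3] at a3
        norm_num at a0 a1 a2 a3
        have h3 : c 3 = 20 * c 4 := by linarith
        have h2 : c 2 = 45 * c 4 := by linarith
        have h1 : c 1 = 36 * c 4 := by linarith
        have h0 : c 0 = 10 * c 4 := by linarith
        refine ⟨112 * c 4, fun x => ?_⟩
        rw [hcx x, hq4, h0, h1, h2, h3]; ring
    choose μ hμ using key
    have E : ∀ x : ℝ, x ∈ Set.Icc (-1 : ℝ) 1 → ∑ k, μ k • pE4 k x = 1 := by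
      intro x hx
      rw [← hnorm x hx]
      exact Finset.sum_congr rfl fun k _ => by rw [hμ k x, smul_eq_mul]
    have A1 := E (-1) (by norm_num)
    have A2 := E 1 (by norm_num)
    have A3 := E 0 (by norm_num)
    have A4 := E (1 / 2) (by norm_num)
    have A5 := E (-(1 / 2)) (by norm_num)
    rw [pE4_eval] at A1 A2 A3 A4 A5
    norm_num at A1 A2 A3 A4 A5
    have m0 : μ 0 = 1 := by linarith
    have m4 : μ 4 = 1 := by linarith
    have m1 : μ 1 = 1 := by linarith
    have m2 : μ 2 = 1 := by linarith
    have m3 : μ 3 = 1 := by linarith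
    intro k x _hx
    have : μ k = 1 := by
      rcases fin5_cases k with rfl | rfl | rfl | rfl | rfl
      exacts [m0, m1, m2, m3, m4]
    rw [hμ k x, this, one_mul]
  · -- nodes
    intro t ht
    have cube := (Odd.strictMono_pow (R := ℝ) (⟨1, by norm_num⟩ : Odd 3))
    have hlt : ∀ a b : ℝ, a ^ 3 < b ^ 3 → a < b := fun a b h => cube.lt_iff_lt.mp h
    have hle : ∀ a b : ℝ, a ^ 3 ≤ b ^ 3 → a ≤ b := fun a b h => cube.le_iff_le.mp h
    have h03 : t 0 < t 3 := hlt _ _ (by rw [ht 0, ht 3]; norm_num [γE4, Matrix.cons_val_two, Matrix.cons_val_three, Matrix.cons_val_four])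
    have h32 : t 3 < t 2 := hlt _ _ (by rw [ht 3, ht 2]; norm_num [γE4, Matrix.cons_val_two, Matrix.cons_val_three, Matrix.cons_val_four])
    have h21 : t 2 < t 1 := hlt _ _ (by rw [ht 2, ht 1]; norm_num [γE4, Matrix.cons_val_two, Matrix.cons_val_three, Matrix.cons_val_four])
    have h14 : t 1 < t 4 := hlt _ _ (by rw [ht 1, ht 4]; norm_num [γE4, Matrix.cons_val_two, Matrix.cons_val_three, Matrix.cons_val_four])
    refine ⟨?_, sum_one, ?_, ⟨h03, h32, h21, h14⟩, ?_⟩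
    · intro k
      have hγ : -1 ≤ γE4 k ∧ γE4 k ≤ 1 := by
        rcases fin5_cases k with rfl | rfl | rfl | rfl | rfl <;> norm_num [γE4, Matrix.cons_val_two, Matrix.cons_val_three, Matrix.cons_val_four]
      constructor
      · refine hle _ _ ?_
        rw [ht k]
        nlinarith [hγ.1]
      · refine hle _ _ ?_
        rw [ht k]
        nlinarith [hγ.2]
    · intro x
      calc ∑ k, t k ^ 3 * pE4 k x = ∑ k, γE4 k * pE4 k x :=
            Finset.sum_congr rfl fun k _ => by rw [ht k]
        _ = x ^ 3 := (xcube x).symm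
    · intro hmon
      exact absurd (hmon (show (1 : Fin 5) ≤ 2 by decide)) (not_le.mpr h21)
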